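/- arXiv:1806.04819 — 7 statements merged into one kernel-verified Lean document; each statement's English description precedes it below -/
import Mathlib

section
/- Let ε > 0, T ≥ 1, and set θ_t(ε) = (ε/(ε + 4·log 2))^t for t = 1,…,T. Let Q_0 be a probability measure on X, let c_1,…,c_T : X → ℝ be measurable with c_t(x) ∈ [-log 2, log 2] for all x, and define φ(θ(ε)) = log ∫_X exp(∑_{t=1}^T θ_t(ε)·c_t(x)) dQ_0(x). Then for every x ∈ X, -ε/2 ≤ ∑_{t=1}^T θ_t(ε)·c_t(x) - φ(θ(ε)) ≤ ε/2. -/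
open MeasureTheory

lemma geom_Icc_le (r : ℝ) (hr0 : 0 ≤ r) (hr1 : r < 1) (T : ℕ) :
    ∑ t ∈ Finset.Icc 1 T, r ^ t ≤ r / (1 - r) := by
  have h1r : (1 : ℝ) - r ≠ 0 := by linarith
  have h2 : ∑ t ∈ Finset.Icc 1 T, r ^ t = r * ∑ t ∈ Finset.range T, r ^ t := by
    have : Finset.Icc 1 T = Finset.Ico 1 (T + 1) := by
      ext n; simp [Finset.mem_Icc, Finset.mem_Ico]
    rw [this, Finset.sum_Ico_eq_sum_range, Finset.mul_sum]
    simp [pow_succ, pow_add, mul_comm]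
  rw [h2, div_eq_mul_inv]
  apply mul_le_mul_of_nonneg_left _ hr0
  calc ∑ t ∈ Finset.range T, r ^ t = (r ^ T - 1) / (r - 1) := geom_sum_eq hr1.ne T
    _ = (1 - r ^ T) / (1 - r) := by
        rw [div_eq_div_iff (by linarith : r - 1 ≠ 0) h1r]; ring
    _ ≤ 1 / (1 - r) := by
        apply div_le_div_of_nonneg_right _ (by linarith) |>.trans_eq rfl
        · nlinarith [pow_nonneg hr0 T]
    _ = (1 - r)⁻¹ := one_div _

/-- With the MBDE step sizes `θ_t(ε) = (ε/(ε + 4 log 2))^t`, classifiers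
`c_t` valued in `[-log 2, log 2]` and log-normalizer `φ`, the exponent
`⟨θ(ε), c(x)⟩ - φ(θ(ε))` lies in `[-ε/2, ε/2]` for every `x`. -/
theorem mbde_exponent_bounded
    {X : Type*} [MeasurableSpace X]
    (ε : ℝ) (hε : 0 < ε) (T : ℕ) (hT : 1 ≤ T)
    (Q0 : Measure X) [IsProbabilityMeasure Q0]
    (c : ℕ → X → ℝ) (hc : ∀ t, Measurable (c t))
    (hcb : ∀ t x, c t x ∈ Set.Icc (-Real.log 2) (Real.log 2))
    (θ : ℕ → ℝ) (hθ : ∀ t, θ t = (ε / (ε + 4 * Real.log 2)) ^ t)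
    (φ : ℝ)
    (hφ : φ = Real.log (∫ x, Real.exp (∑ t ∈ Finset.Icc 1 T, θ t * c t x) ∂Q0)) :
    ∀ x : X,
      -(ε / 2) ≤ (∑ t ∈ Finset.Icc 1 T, θ t * c t x) - φ ∧
      (∑ t ∈ Finset.Icc 1 T, θ t * c t x) - φ ≤ ε / 2 := by
  have hL : 0 < Real.log 2 := Real.log_pos (by norm_num)
  set r := ε / (ε + 4 * Real.log 2) with hrdef
  have hden : 0 < ε + 4 * Real.log 2 := by linarith
  have hr0 : 0 ≤ r := le_of_lt (div_pos hε hden)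
  have hr1 : r < 1 := (div_lt_one hden).2 (by linarith)
  -- bound on the sum of θ's
  have hsum : ∑ t ∈ Finset.Icc 1 T, r ^ t ≤ ε / (4 * Real.log 2) := by
    have := geom_Icc_le r hr0 hr1 T
    have key : r * (4 * Real.log 2) = ε * (1 - r) := by
      rw [hrdef]; field_simp; ring
    have : r / (1 - r) = ε / (4 * Real.log 2) := by
      rw [div_eq_div_iff (by linarith) (by positivity)]; linarith [key]
    linarith
  -- pointwise bound on S x
  have hS : ∀ x : X, |∑ t ∈ Finset.Icc 1 T, θ t * c t x| ≤ ε / 4 := by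
    intro x
    calc |∑ t ∈ Finset.Icc 1 T, θ t * c t x|
        ≤ ∑ t ∈ Finset.Icc 1 T, |θ t * c t x| := Finset.abs_sum_le_sum_abs _ _
      _ ≤ ∑ t ∈ Finset.Icc 1 T, r ^ t * Real.log 2 := by
          apply Finset.sum_le_sum
          intro t _
          rw [abs_mul, hθ t, abs_of_nonneg (pow_nonneg hr0 t)]
          exact mul_le_mul_of_nonneg_left (abs_le.2 ⟨(hcb t x).1, (hcb t x).2⟩)
            (pow_nonneg hr0 t)
      _ = (∑ t ∈ Finset.Icc 1 T, r ^ t) * Real.log 2 := by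
          rw [Finset.sum_mul]
      _ ≤ (ε / (4 * Real.log 2)) * Real.log 2 :=
          mul_le_mul_of_nonneg_right hsum hL.le
      _ = ε / 4 := by field_simp
  -- integrability and bounds on the integral
  set S : X → ℝ := fun x => ∑ t ∈ Finset.Icc 1 T, θ t * c t x with hSdef
  have hSm : Measurable S := by
    apply Finset.measurable_sum
    intro t _
    exact measurable_const.mul (hc t)
  have hmeas : Measurable fun x => Real.exp (S x) := Real.measurable_exp.comp hSm
  have hint : Integrable (fun x => Real.exp (S x)) Q0 := by
    apply (integrable_const (Real.exp (ε / 4))).mono' hmeas.aestronglyMeasurable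
    filter_upwards with x
    rw [Real.norm_eq_abs, abs_of_pos (Real.exp_pos _)]
    exact Real.exp_le_exp.2 ((abs_le.1 (hS x)).2)
  have hIle : (∫ x, Real.exp (S x) ∂Q0) ≤ Real.exp (ε / 4) := by
    calc (∫ x, Real.exp (S x) ∂Q0) ≤ ∫ _, Real.exp (ε / 4) ∂Q0 := by
          apply integral_mono hint (integrable_const _)
          intro x
          exact Real.exp_le_exp.2 ((abs_le.1 (hS x)).2)
      _ = Real.exp (ε / 4) := by simp
  have hIge : Real.exp (-(ε / 4)) ≤ ∫ x, Real.exp (S x) ∂Q0 := by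
    calc Real.exp (-(ε / 4)) = ∫ _, Real.exp (-(ε / 4)) ∂Q0 := by simp
      _ ≤ ∫ x, Real.exp (S x) ∂Q0 := by
          apply integral_mono (integrable_const _) hint
          intro x
          exact Real.exp_le_exp.2 (abs_le.1 (hS x)).1
  have hφle : φ ≤ ε / 4 := by
    rw [hφ]
    calc Real.log (∫ x, Real.exp (S x) ∂Q0) ≤ Real.log (Real.exp (ε / 4)) :=
          Real.log_le_log (lt_of_lt_of_le (Real.exp_pos _) hIge) hIle
      _ = ε / 4 := Real.log_exp _
  have hφge : -(ε / 4) ≤ φ := by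
    rw [hφ]
    calc -(ε / 4) = Real.log (Real.exp (-(ε / 4))) := (Real.log_exp _).symm
      _ ≤ Real.log (∫ x, Real.exp (S x) ∂Q0) :=
          Real.log_le_log (Real.exp_pos _) hIge
  intro x
  have := abs_le.1 (hS x)
  constructor <;> linarith [this.1, this.2]
end

section
/- Let ε > 0 and let Q_0 be a probability measure on X. Suppose q(x) = exp(∑_{t=1}^T θ_t(ε)·c_t(x) - φ) and q'(x) = exp(∑_{t=1}^{T'} θ_t(ε)·c'_t(x) - φ') are two densities with respect to Q_0, where θ_t(ε) = (ε/(ε + 4·log 2))^t, each c_t and c'_t maps X into [-log 2, log 2], and φ, φ' are the respective log-normalizers (φ = log ∫ exp(∑_t θ_t(ε) c_t) dQ_0, similarly φ'). Then q(x) ∈ [exp(-ε/2), exp(ε/2)] for all x, and consequently q(x) ≤ exp(ε) · q'(x) for all x ∈ X. (The output Q_T of MBDE lies in the ε-mollifier M_ε.) -/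
open MeasureTheory

lemma sum_abs_bound (ε : ℝ) (hε : 0 < ε) (T : ℕ) (f : ℕ → ℝ)
    (hf : ∀ t, |f t| ≤ Real.log 2) :
    |∑ t ∈ Finset.Icc 1 T, (ε / (ε + 4 * Real.log 2)) ^ t * f t| ≤ ε / 4 := by
  have hL : 0 < Real.log 2 := Real.log_pos (by norm_num)
  set r : ℝ := ε / (ε + 4 * Real.log 2) with hr
  have hden : 0 < ε + 4 * Real.log 2 := by linarith
  have hr0 : 0 ≤ r := div_nonneg hε.le hden.le
  have hr1 : r < 1 := (div_lt_one hden).2 (by linarith)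
  have h1 : |∑ t ∈ Finset.Icc 1 T, r ^ t * f t| ≤ ∑ t ∈ Finset.Icc 1 T, r ^ t * Real.log 2 := by
    refine (Finset.abs_sum_le_sum_abs _ _).trans (Finset.sum_le_sum fun t _ => ?_)
    rw [abs_mul, abs_pow, abs_of_nonneg hr0]
    exact mul_le_mul_of_nonneg_left (hf t) (pow_nonneg hr0 t)
  have h2 : ∑ t ∈ Finset.Icc 1 T, r ^ t ≤ r / (1 - r) := by
    rw [show Finset.Icc 1 T = Finset.Ico 1 (T+1) from by rw [Finset.Ico_add_one_right_eq_Icc],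
      Finset.sum_Ico_eq_sum_range]
    have : ∀ i, r ^ (1 + i) = r * r ^ i := fun i => by ring
    simp only [this, ← Finset.mul_sum]
    have hg : ∑ i ∈ Finset.range (T + 1 - 1), r ^ i ≤ (1 - r)⁻¹ := by
      rcases eq_or_lt_of_le hr0 with h | h
      · simp [← h]
        split <;> norm_num
      · exact Summable.sum_le_tsum _ (fun i _ => by positivity)
          (summable_geometric_of_lt_one hr0 hr1) |>.trans_eq
          (tsum_geometric_of_lt_one hr0 hr1)
    calc r * ∑ i ∈ Finset.range (T + 1 - 1), r ^ i ≤ r * (1 - r)⁻¹ :=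
          mul_le_mul_of_nonneg_left hg hr0
      _ = r / (1 - r) := by rw [div_eq_mul_inv]
  have h3 : r / (1 - r) = ε / (4 * Real.log 2) := by
    rw [hr]; field_simp; ring
  refine h1.trans ?_
  rw [← Finset.sum_mul]
  calc (∑ t ∈ Finset.Icc 1 T, r ^ t) * Real.log 2
      ≤ (ε / (4 * Real.log 2)) * Real.log 2 := by
        exact mul_le_mul_of_nonneg_right (h2.trans_eq h3) hL.le
    _ = ε / 4 := by field_simp

lemma density_bound {X : Type*} [MeasurableSpace X]
    (ε : ℝ) (hε : 0 < ε)
    (Q0 : Measure X) [IsProbabilityMeasure Q0]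
    (T : ℕ) (c : ℕ → X → ℝ) (hc : ∀ t, Measurable (c t))
    (hcb : ∀ t x, c t x ∈ Set.Icc (-Real.log 2) (Real.log 2))
    (θ : ℕ → ℝ) (hθ : ∀ t, θ t = (ε / (ε + 4 * Real.log 2)) ^ t)
    (φ : ℝ)
    (hφ : φ = Real.log (∫ x, Real.exp (∑ t ∈ Finset.Icc 1 T, θ t * c t x) ∂Q0)) :
    ∀ x, Real.exp ((∑ t ∈ Finset.Icc 1 T, θ t * c t x) - φ) ∈
      Set.Icc (Real.exp (-(ε / 2))) (Real.exp (ε / 2)) := by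
  set S : X → ℝ := fun x => ∑ t ∈ Finset.Icc 1 T, θ t * c t x with hS
  have hSb : ∀ x, |S x| ≤ ε / 4 := by
    intro x
    have := sum_abs_bound ε hε T (fun t => c t x)
      (fun t => abs_le.2 (hcb t x))
    simpa [hS, hθ] using this
  have hSmeas : Measurable S := Finset.measurable_sum _ fun t _ => (hc t).const_mul _
  have hexp_int : Integrable (fun x => Real.exp (S x)) Q0 := by
    refine Integrable.mono' (integrable_const (Real.exp (ε / 4)))
      (hSmeas.exp.aestronglyMeasurable) (Filter.Eventually.of_forall fun x => ?_)
    rw [Real.norm_eq_abs, abs_of_nonneg (Real.exp_nonneg _)]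
    exact Real.exp_le_exp.2 ((abs_le.1 (hSb x)).2)
  have hIub : ∫ x, Real.exp (S x) ∂Q0 ≤ Real.exp (ε / 4) := by
    calc ∫ x, Real.exp (S x) ∂Q0 ≤ ∫ _, Real.exp (ε / 4) ∂Q0 :=
          integral_mono hexp_int (integrable_const _)
            (fun x => Real.exp_le_exp.2 ((abs_le.1 (hSb x)).2))
      _ = Real.exp (ε / 4) := by simp
  have hIlb : Real.exp (-(ε / 4)) ≤ ∫ x, Real.exp (S x) ∂Q0 := by
    calc Real.exp (-(ε / 4)) = ∫ _, Real.exp (-(ε / 4)) ∂Q0 := by simp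
      _ ≤ ∫ x, Real.exp (S x) ∂Q0 :=
          integral_mono (integrable_const _) hexp_int
            (fun x => Real.exp_le_exp.2 (by linarith [(abs_le.1 (hSb x)).1]))
  have hIpos : 0 < ∫ x, Real.exp (S x) ∂Q0 := lt_of_lt_of_le (Real.exp_pos _) hIlb
  have hφub : φ ≤ ε / 4 := by
    rw [hφ]
    calc Real.log (∫ x, Real.exp (S x) ∂Q0) ≤ Real.log (Real.exp (ε / 4)) :=
          Real.log_le_log hIpos hIub
      _ = ε / 4 := Real.log_exp _
  have hφlb : -(ε / 4) ≤ φ := by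
    rw [hφ]
    calc -(ε / 4) = Real.log (Real.exp (-(ε / 4))) := (Real.log_exp _).symm
      _ ≤ Real.log (∫ x, Real.exp (S x) ∂Q0) := Real.log_le_log (Real.exp_pos _) hIlb
  intro x
  have h := hSb x
  have h1 := (abs_le.1 h).1
  have h2 := (abs_le.1 h).2
  constructor
  · exact Real.exp_le_exp.2 (by linarith)
  · exact Real.exp_le_exp.2 (by linarith)

/-- The output of MBDE lies in the ε-mollifier `M_ε`: any two densities of the
MBDE exponential-family form (w.r.t. the base probability measure `Q0`) take
values in `[exp(-ε/2), exp(ε/2)]` and consequently satisfy the mollifier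
likelihood-ratio bound `q x ≤ exp ε * q' x`. -/
theorem mbde_output_in_mollifier
    {X : Type*} [MeasurableSpace X]
    (ε : ℝ) (hε : 0 < ε)
    (Q0 : Measure X) [IsProbabilityMeasure Q0]
    (T T' : ℕ) (hT : 1 ≤ T) (hT' : 1 ≤ T')
    (c c' : ℕ → X → ℝ)
    (hc : ∀ t, Measurable (c t)) (hc' : ∀ t, Measurable (c' t))
    (hcb : ∀ t x, c t x ∈ Set.Icc (-Real.log 2) (Real.log 2))
    (hcb' : ∀ t x, c' t x ∈ Set.Icc (-Real.log 2) (Real.log 2))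
    (θ : ℕ → ℝ) (hθ : ∀ t, θ t = (ε / (ε + 4 * Real.log 2)) ^ t)
    (φ φ' : ℝ)
    (hφ : φ = Real.log (∫ x, Real.exp (∑ t ∈ Finset.Icc 1 T, θ t * c t x) ∂Q0))
    (hφ' : φ' = Real.log (∫ x, Real.exp (∑ t ∈ Finset.Icc 1 T', θ t * c' t x) ∂Q0))
    (q q' : X → ℝ)
    (hq : ∀ x, q x = Real.exp ((∑ t ∈ Finset.Icc 1 T, θ t * c t x) - φ))
    (hq' : ∀ x, q' x = Real.exp ((∑ t ∈ Finset.Icc 1 T', θ t * c' t x) - φ')) :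
    (∀ x, q x ∈ Set.Icc (Real.exp (-(ε / 2))) (Real.exp (ε / 2))) ∧
    (∀ x, q x ≤ Real.exp ε * q' x) := by
  have hb := density_bound ε hε Q0 T c hc hcb θ hθ φ hφ
  have hb' := density_bound ε hε Q0 T' c' hc' hcb' θ hθ φ' hφ'
  have hqmem : ∀ x, q x ∈ Set.Icc (Real.exp (-(ε / 2))) (Real.exp (ε / 2)) := by
    intro x; rw [hq x]; exact hb x
  refine ⟨hqmem, fun x => ?_⟩
  have h1 := (hqmem x).2
  have h2 : Real.exp (-(ε / 2)) ≤ q' x := by rw [hq' x]; exact (hb' x).1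
  calc q x ≤ Real.exp (ε / 2) := h1
    _ = Real.exp ε * Real.exp (-(ε / 2)) := by rw [← Real.exp_add]; ring_nf
    _ ≤ Real.exp ε * q' x := mul_le_mul_of_nonneg_left h2 (Real.exp_nonneg _)
end

section
/- Let Q be a probability measure on X, let c : X → ℝ be measurable with c(x) ∈ [-log 2, log 2] for all x, let γ ∈ (0,1], and suppose (1/log 2) · ∫ (-c) dQ ≥ γ. Then ∫ exp(c(x)) dQ(x) ≤ exp(-Γ(γ)), where Γ(z) = log(4/(5 - 3z)). -/
open MeasureTheory

lemma chord_bound {x : ℝ} (hx : x ∈ Set.Icc (-Real.log 2) (Real.log 2)) :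
    Real.exp x ≤ 5/4 + 3/(4 * Real.log 2) * x := by
  have hL : (0:ℝ) < Real.log 2 := Real.log_pos (by norm_num)
  set L := Real.log 2
  have ha : (0:ℝ) ≤ (L - x)/(2*L) := by
    apply div_nonneg <;> nlinarith [hx.2]
  have hb : (0:ℝ) ≤ (x + L)/(2*L) := by
    apply div_nonneg <;> nlinarith [hx.1]
  have hab : (L - x)/(2*L) + (x + L)/(2*L) = 1 := by field_simp; ring
  have key := convexOn_exp.2 (Set.mem_univ (-L)) (Set.mem_univ L) ha hb hab
  have h1 : ((L - x)/(2*L)) • (-L) + ((x + L)/(2*L)) • L = x := by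
    simp only [smul_eq_mul]; field_simp; ring
  have h2 : Real.exp (-L) = 1/2 := by
    rw [Real.exp_neg, Real.exp_log] <;> norm_num
  have h3 : Real.exp L = 2 := Real.exp_log (by norm_num)
  rw [h1, h2, h3, smul_eq_mul, smul_eq_mul] at key
  calc Real.exp x ≤ (L - x)/(2*L) * (1/2) + (x + L)/(2*L) * 2 := key
    _ = 5/4 + 3/(4*L) * x := by field_simp; ring

/-- High-boosting-regime moment bound: if the classifier `c` is valued in
`[-log 2, log 2]` and satisfies the weak learning guarantee
`(1/log 2) ∫ (-c) dQ ≥ γ`, then `∫ exp(c) dQ ≤ exp(-Γ(γ))` where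
`Γ(z) = log (4 / (5 - 3 z))`. -/
theorem chord_wla_bound
    {X : Type*} [MeasurableSpace X] (Q : Measure X) [IsProbabilityMeasure Q]
    (c : X → ℝ) (hcm : Measurable c)
    (hcb : ∀ x, c x ∈ Set.Icc (-Real.log 2) (Real.log 2))
    (γ : ℝ) (hγ : γ ∈ Set.Ioc (0 : ℝ) 1)
    (hwla : γ ≤ (1 / Real.log 2) * ∫ x, -c x ∂Q) :
    ∫ x, Real.exp (c x) ∂Q ≤ Real.exp (-Real.log (4 / (5 - 3 * γ))) := by
  have hL : (0:ℝ) < Real.log 2 := Real.log_pos (by norm_num)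
  have hci : Integrable c Q := by
    apply Integrable.mono' (integrable_const (Real.log 2)) hcm.aestronglyMeasurable
    filter_upwards with x
    rw [Real.norm_eq_abs, abs_le]; exact ⟨(hcb x).1, (hcb x).2⟩
  have hei : Integrable (fun x => Real.exp (c x)) Q := by
    apply Integrable.mono' (integrable_const (2:ℝ))
      (Real.measurable_exp.comp hcm).aestronglyMeasurable
    filter_upwards with x
    simp only [Function.comp_apply]
    rw [Real.norm_eq_abs, abs_of_pos (Real.exp_pos _)]
    calc Real.exp (c x) ≤ Real.exp (Real.log 2) := Real.exp_le_exp.2 (hcb x).2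
      _ = 2 := Real.exp_log (by norm_num)
  have hIc : ∫ x, c x ∂Q ≤ -γ * Real.log 2 := by
    rw [integral_neg] at hwla
    have h := mul_le_mul_of_nonneg_right hwla hL.le
    have h2 : (1 / Real.log 2) * (-∫ x, c x ∂Q) * Real.log 2 = -∫ x, c x ∂Q := by
      field_simp
    rw [h2] at h
    linarith
  have step1 : ∫ x, Real.exp (c x) ∂Q
      ≤ ∫ x, (5/4 + 3/(4 * Real.log 2) * c x) ∂Q := by
    apply integral_mono hei (by exact (integrable_const _).add (hci.const_mul _))
    intro x; exact chord_bound (hcb x)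
  have step2 : ∫ x, (5/4 + 3/(4 * Real.log 2) * c x) ∂Q
      = 5/4 + 3/(4 * Real.log 2) * ∫ x, c x ∂Q := by
    rw [integral_add (integrable_const _) (hci.const_mul _), integral_const,
      integral_const_mul]
    simp
  have h3 : 3/(4 * Real.log 2) * ∫ x, c x ∂Q ≤ -(3*γ)/4 := by
    have hpos : (0:ℝ) < 3/(4 * Real.log 2) := by positivity
    calc 3/(4 * Real.log 2) * ∫ x, c x ∂Q
        ≤ 3/(4 * Real.log 2) * (-γ * Real.log 2) := by
          exact mul_le_mul_of_nonneg_left hIc hpos.le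
      _ = -(3*γ)/4 := by field_simp
  have h5 : (0:ℝ) < 5 - 3*γ := by linarith [hγ.2]
  have hrhs : Real.exp (-Real.log (4 / (5 - 3 * γ))) = (5 - 3*γ)/4 := by
    rw [Real.exp_neg, Real.exp_log (by positivity)]
    field_simp
  rw [hrhs]
  calc ∫ x, Real.exp (c x) ∂Q ≤ 5/4 + 3/(4 * Real.log 2) * ∫ x, c x ∂Q := by
        rw [← step2]; exact step1
    _ ≤ (5 - 3*γ)/4 := by linarith
end

section
/- (KL drop, high boosting regime.) Let p and q be probability densities with respect to a σ-finite measure μ with q > 0 and KL(p,q) finite. Let c : X → ℝ be measurable with c(x) ∈ [-log 2, log 2] for all x, let c* denote the essential supremum of |c| (assumed positive), and suppose the weak learning guarantees (1/c*)·∫ c·p dμ ≥ γ_P and (1/log 2)·∫ (-c)·q dμ ≥ γ_Q hold with γ_P ∈ (0,1] and γ_Q ∈ [1/3, 1]. Let θ ∈ (0,1), φ(θ) = log ∫ exp(θ·c)·q dμ, and q_θ = exp(θ·c - φ(θ))·q. Then KL(p, q_θ) ≤ KL(p,q) - θ·(c*·γ_P + Γ(γ_Q)), where Γ(z) = log(4/(5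 - 3z)). -/
open MeasureTheory

/-- Kullback–Leibler divergence between two densities w.r.t. `μ`. -/
noncomputable def KLd {X : Type*} [MeasurableSpace X] (μ : Measure X)
    (p q : X → ℝ) : ℝ :=
  ∫ x, p x * Real.log (p x / q x) ∂μ

/-- KL drop in the high boosting regime: under the weak learning guarantees
with `γ_Q ∈ [1/3, 1]`, one boosting step with step size `θ ∈ (0,1)` decreases
the KL divergence by at least `θ (c* γ_P + Γ(γ_Q))`, with
`Γ(z) = log (4 / (5 - 3 z))`. -/
theorem kl_drop_high_boosting
    {X : Type*} [MeasurableSpace X] (μ : Measure X) [SigmaFinite μ]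
    (p q : X → ℝ) (hpm : Measurable p) (hqm : Measurable q)
    (hp0 : ∀ x, 0 ≤ p x) (hq0 : ∀ x, 0 < q x)
    (hpint : Integrable p μ) (hqint : Integrable q μ)
    (hp1 : ∫ x, p x ∂μ = 1) (hq1 : ∫ x, q x ∂μ = 1)
    (hKLfin : Integrable (fun x => p x * Real.log (p x / q x)) μ)
    (c : X → ℝ) (hcm : Measurable c)
    (hcb : ∀ x, c x ∈ Set.Icc (-Real.log 2) (Real.log 2))
    (cstar : ℝ) (hcstar : cstar = essSup (fun x => |c x|) μ) (hcpos : 0 < cstar)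
    (γP γQ : ℝ) (hγP : γP ∈ Set.Ioc (0 : ℝ) 1) (hγQ : γQ ∈ Set.Icc (1/3 : ℝ) 1)
    (hwlaP : γP ≤ (1 / cstar) * ∫ x, c x * p x ∂μ)
    (hwlaQ : γQ ≤ (1 / Real.log 2) * ∫ x, (-c x) * q x ∂μ)
    (θ : ℝ) (hθ : θ ∈ Set.Ioo (0 : ℝ) 1)
    (φ : ℝ) (hφ : φ = Real.log (∫ x, Real.exp (θ * c x) * q x ∂μ))
    (qθ : X → ℝ) (hqθ : ∀ x, qθ x = Real.exp (θ * c x - φ) * q x) :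
    KLd μ p qθ ≤ KLd μ p q - θ * (cstar * γP + Real.log (4 / (5 - 3 * γQ))) := by
  obtain ⟨hθ0, hθ1⟩ := hθ
  set L : ℝ := Real.log 2 with hLdef
  have hL : 0 < L := Real.log_pos (by norm_num)
  -- integrability of c * q and c * p
  have hcq : Integrable (fun x => c x * q x) μ := by
    refine (hqint.const_mul L).mono' ((hcm.mul hqm).aestronglyMeasurable) ?_
    refine Filter.Eventually.of_forall fun x => ?_
    have h := hcb x
    rw [Real.norm_eq_abs, abs_mul, abs_of_nonneg (hq0 x).le]
    exact mul_le_mul_of_nonneg_right (abs_le.2 ⟨h.1, h.2⟩) (hq0 x).le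
  have hcp : Integrable (fun x => c x * p x) μ := by
    refine (hpint.const_mul L).mono' ((hcm.mul hpm).aestronglyMeasurable) ?_
    refine Filter.Eventually.of_forall fun x => ?_
    have h := hcb x
    rw [Real.norm_eq_abs, abs_mul, abs_of_nonneg (hp0 x)]
    exact mul_le_mul_of_nonneg_right (abs_le.2 ⟨h.1, h.2⟩) (hp0 x)
  -- integrability of exp(θc) q
  have hexpb : ∀ x, Real.exp (θ * c x) ≤ 2 := by
    intro x
    have h := (hcb x).2
    have : θ * c x ≤ L := by
      rcases le_or_gt (c x) 0 with h0 | h0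
      · nlinarith
      · nlinarith
    calc Real.exp (θ * c x) ≤ Real.exp L := Real.exp_le_exp.2 this
      _ = 2 := Real.exp_log (by norm_num)
  have hexplb : ∀ x, (1 : ℝ)/2 ≤ Real.exp (θ * c x) := by
    intro x
    have h := (hcb x).1
    have : -L ≤ θ * c x := by
      rcases le_or_gt (c x) 0 with h0 | h0
      · nlinarith
      · nlinarith
    calc (1:ℝ)/2 = Real.exp (-L) := by
          rw [Real.exp_neg, Real.exp_log (by norm_num)]; norm_num
      _ ≤ Real.exp (θ * c x) := Real.exp_le_exp.2 this
  have heq : Integrable (fun x => Real.exp (θ * c x) * q x) μ := by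
    refine (hqint.const_mul 2).mono'
      (((Real.measurable_exp.comp (hcm.const_mul θ)).mul hqm).aestronglyMeasurable) ?_
    refine Filter.Eventually.of_forall fun x => ?_
    rw [Real.norm_eq_abs, abs_mul, abs_of_nonneg (Real.exp_pos _).le,
      abs_of_nonneg (hq0 x).le]
    exact mul_le_mul_of_nonneg_right (hexpb x) (hq0 x).le
  set I : ℝ := ∫ x, Real.exp (θ * c x) * q x ∂μ with hIdef
  have hI2 : (1:ℝ)/2 ≤ I := by
    have : (1:ℝ)/2 = ∫ x, (1/2) * q x ∂μ := by
      rw [integral_const_mul, hq1, mul_one]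
    rw [this]
    refine integral_mono (hqint.const_mul _) heq fun x => ?_
    exact mul_le_mul_of_nonneg_right (hexplb x) (hq0 x).le
  have hIpos : 0 < I := lt_of_lt_of_le (by norm_num) hI2
  -- KL decomposition
  have hkey : ∀ x, p x * Real.log (p x / qθ x)
      = p x * Real.log (p x / q x) - p x * (θ * c x - φ) := by
    intro x
    rcases eq_or_lt_of_le (hp0 x) with h0 | h0
    · rw [← h0]; ring
    · have hq := hq0 x
      have hqθ' : qθ x = Real.exp (θ * c x - φ) * q x := hqθ x
      have : p x / qθ x = p x / q x * Real.exp (-(θ * c x - φ)) := by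
        rw [hqθ', Real.exp_neg, div_mul_eq_mul_div, ← div_eq_mul_inv, div_div,
          mul_comm (Real.exp (θ * c x - φ)) (q x)]
      rw [this, Real.log_mul (by positivity) (Real.exp_ne_zero _), Real.log_exp]
      ring
  have hint2 : Integrable (fun x => p x * (θ * c x - φ)) μ := by
    refine (hpint.const_mul (θ * L + |φ|)).mono'
      ((hpm.mul ((hcm.const_mul θ).sub_const φ)).aestronglyMeasurable) ?_
    refine Filter.Eventually.of_forall fun x => ?_
    rw [Real.norm_eq_abs, abs_mul, abs_of_nonneg (hp0 x), mul_comm (θ * L + |φ|) (p x)]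
    refine mul_le_mul_of_nonneg_left ?_ (hp0 x)
    have h := hcb x
    have : |θ * c x| ≤ θ * L := by
      rw [abs_mul, abs_of_nonneg hθ0.le]
      exact mul_le_mul_of_nonneg_left (abs_le.2 ⟨h.1, h.2⟩) hθ0.le
    calc |θ * c x - φ| ≤ |θ * c x| + |φ| := abs_sub _ _
      _ ≤ θ * L + |φ| := by linarith
  have hKLθ : KLd μ p qθ = KLd μ p q - (θ * (∫ x, c x * p x ∂μ) - φ) := by
    have h1 : KLd μ p qθ
        = ∫ x, (p x * Real.log (p x / q x) - p x * (θ * c x - φ)) ∂μ := by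
      unfold KLd
      exact integral_congr_ae (Filter.Eventually.of_forall fun x => hkey x)
    rw [h1, integral_sub hKLfin hint2]
    unfold KLd
    congr 1
    have : (fun x => p x * (θ * c x - φ))
        = fun x => θ * (c x * p x) - φ * p x := by
      funext x; ring
    rw [this, integral_sub (hcp.const_mul θ) (hpint.const_mul φ),
      integral_const_mul, integral_const_mul, hp1, mul_one]
  -- bound on I
  have hJ : (∫ x, c x * q x ∂μ) ≤ -(L * γQ) := by
    have hJ' : (∫ x, (-c x) * q x ∂μ) = -∫ x, c x * q x ∂μ := by
      rw [← integral_neg]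
      exact integral_congr_ae (Filter.Eventually.of_forall fun x => by ring)
    rw [hJ'] at hwlaQ
    rw [one_div] at hwlaQ
    have := (mul_le_mul_iff_right₀ hL).2 hwlaQ
    rw [← mul_assoc, mul_inv_cancel₀ hL.ne', one_mul] at this
    linarith
  set J : ℝ := ∫ x, c x * q x ∂μ with hJdef
  have h2θ : (0:ℝ) < (2:ℝ) ^ θ := Real.rpow_pos_of_pos (by norm_num) θ
  have h2θ' : (0:ℝ) < (2:ℝ) ^ (-θ) := Real.rpow_pos_of_pos (by norm_num) (-θ)
  have h2exp : (2:ℝ) ^ θ = Real.exp (θ * L) := by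
    rw [Real.rpow_def_of_pos (by norm_num), mul_comm]
  have h2exp' : (2:ℝ) ^ (-θ) = Real.exp (-(θ * L)) := by
    rw [Real.rpow_def_of_pos (by norm_num)]; ring_nf
    rw [hLdef]; ring_nf
  -- pointwise convexity bound
  have hpt : ∀ x, Real.exp (θ * c x)
      ≤ (c x + L) / (2 * L) * (2:ℝ) ^ θ + (L - c x) / (2 * L) * (2:ℝ) ^ (-θ) := by
    intro x
    have h := hcb x
    have ha : 0 ≤ (c x + L) / (2 * L) := by
      apply div_nonneg; linarith [h.1]; linarith
    have hb : 0 ≤ (L - c x) / (2 * L) := by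
      apply div_nonneg; linarith [h.2]; linarith
    have hab : (c x + L) / (2 * L) + (L - c x) / (2 * L) = 1 := by
      rw [← add_div, div_eq_one_iff_eq (by positivity)]
      ring
    have hconv := convexOn_exp.2 (Set.mem_univ (θ * L)) (Set.mem_univ (-(θ * L)))
      ha hb hab
    simp only [smul_eq_mul] at hconv
    have harg : (c x + L) / (2 * L) * (θ * L) + (L - c x) / (2 * L) * (-(θ * L))
        = θ * c x := by
      rw [div_mul_eq_mul_div, div_mul_eq_mul_div, ← add_div,
        div_eq_iff (by positivity : (2 * L : ℝ) ≠ 0)]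
      ring
    rw [harg] at hconv
    rw [h2exp, h2exp']
    linarith
  have hIbound : I ≤ (2:ℝ) ^ θ * ((J + L) / (2 * L)) + (2:ℝ) ^ (-θ) * ((L - J) / (2 * L)) := by
    have hrhs : Integrable (fun x =>
        ((c x + L) / (2 * L) * (2:ℝ) ^ θ + (L - c x) / (2 * L) * (2:ℝ) ^ (-θ)) * q x) μ := by
      have : (fun x =>
          ((c x + L) / (2 * L) * (2:ℝ) ^ θ + (L - c x) / (2 * L) * (2:ℝ) ^ (-θ)) * q x)
          = fun x => ((2:ℝ)^θ / (2*L) - (2:ℝ)^(-θ) / (2*L)) * (c x * q x)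
            + (((2:ℝ)^θ + (2:ℝ)^(-θ)) / 2) * q x := by
        funext x; field_simp; ring
      rw [this]
      exact (hcq.const_mul _).add (hqint.const_mul _)
    have hle : I ≤ ∫ x,
        ((c x + L) / (2 * L) * (2:ℝ) ^ θ + (L - c x) / (2 * L) * (2:ℝ) ^ (-θ)) * q x ∂μ := by
      refine integral_mono heq hrhs fun x => ?_
      exact mul_le_mul_of_nonneg_right (hpt x) (hq0 x).le
    refine hle.trans (le_of_eq ?_)
    have : (fun x =>
        ((c x + L) / (2 * L) * (2:ℝ) ^ θ + (L - c x) / (2 * L) * (2:ℝ) ^ (-θ)) * q x)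
        = fun x => ((2:ℝ)^θ / (2*L) - (2:ℝ)^(-θ) / (2*L)) * (c x * q x)
          + (((2:ℝ)^θ + (2:ℝ)^(-θ)) / 2) * q x := by
      funext x; field_simp; ring
    rw [this, integral_add (hcq.const_mul _) (hqint.const_mul _),
      integral_const_mul, integral_const_mul, hq1, ← hJdef]
    field_simp
    ring
  -- monotonicity in J
  have h2ge : (2:ℝ) ^ (-θ) ≤ (2:ℝ) ^ θ := by
    apply Real.rpow_le_rpow_of_exponent_le (by norm_num)
    linarith
  have hIbound2 : I ≤ (2:ℝ) ^ θ * ((1 - γQ) / 2) + (2:ℝ) ^ (-θ) * ((1 + γQ) / 2) := by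
    refine hIbound.trans ?_
    have h1 : (2:ℝ) ^ θ * ((J + L) / (2 * L)) + (2:ℝ) ^ (-θ) * ((L - J) / (2 * L))
        = ((2:ℝ)^θ + (2:ℝ)^(-θ)) / 2 + ((2:ℝ)^θ - (2:ℝ)^(-θ)) * (J / (2 * L)) := by
      field_simp; ring
    have h2 : (2:ℝ) ^ θ * ((1 - γQ) / 2) + (2:ℝ) ^ (-θ) * ((1 + γQ) / 2)
        = ((2:ℝ)^θ + (2:ℝ)^(-θ)) / 2 + ((2:ℝ)^θ - (2:ℝ)^(-θ)) * (-γQ / 2) := by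
      ring
    rw [h1, h2]
    have hJL : J / (2 * L) ≤ -γQ / 2 := by
      rw [div_le_div_iff₀ (by linarith) (by norm_num)]
      nlinarith
    have := mul_le_mul_of_nonneg_left hJL (sub_nonneg.2 h2ge)
    linarith
  -- concavity of rpow
  have hRpos : (0:ℝ) < (5 - 3 * γQ) / 4 := by
    have := hγQ.2; linarith
  have hconc : (2:ℝ) ^ θ * ((1 - γQ) / 2) + (2:ℝ) ^ (-θ) * ((1 + γQ) / 2)
      ≤ ((5 - 3 * γQ) / 4) ^ θ := by
    have hhalf : ((2:ℝ)⁻¹) ^ θ = (2:ℝ) ^ (-θ) := by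
      rw [Real.rpow_neg (by norm_num), Real.inv_rpow (by norm_num)]
    have h := (Real.concaveOn_rpow hθ0.le hθ1.le).2
      (Set.mem_Ici.2 (by norm_num : (0:ℝ) ≤ 2))
      (Set.mem_Ici.2 (by norm_num : (0:ℝ) ≤ (2:ℝ)⁻¹))
      (by linarith [hγQ.2] : (0:ℝ) ≤ (1 - γQ) / 2)
      (by linarith [hγQ.1] : (0:ℝ) ≤ (1 + γQ) / 2)
      (by ring : (1 - γQ) / 2 + (1 + γQ) / 2 = 1)
    simp only [smul_eq_mul] at h
    have harg : (1 - γQ) / 2 * 2 + (1 + γQ) / 2 * (2:ℝ)⁻¹ = (5 - 3 * γQ) / 4 := by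
      ring
    rw [harg] at h
    calc (2:ℝ) ^ θ * ((1 - γQ) / 2) + (2:ℝ) ^ (-θ) * ((1 + γQ) / 2)
        = (1 - γQ) / 2 * (2:ℝ) ^ θ + (1 + γQ) / 2 * ((2:ℝ)⁻¹) ^ θ := by
          rw [hhalf]; ring
      _ ≤ ((5 - 3 * γQ) / 4) ^ θ := h
  have hφle : φ ≤ θ * Real.log ((5 - 3 * γQ) / 4) := by
    rw [hφ]
    calc Real.log I ≤ Real.log (((5 - 3 * γQ) / 4) ^ θ) :=
          Real.log_le_log hIpos (hIbound2.trans hconc)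
      _ = θ * Real.log ((5 - 3 * γQ) / 4) := Real.log_rpow hRpos θ
  -- final assembly
  have hΓ : Real.log (4 / (5 - 3 * γQ)) = -Real.log ((5 - 3 * γQ) / 4) := by
    rw [← Real.log_inv]
    congr 1
    rw [inv_div]
  have hP : θ * (cstar * γP) ≤ θ * ∫ x, c x * p x ∂μ := by
    refine mul_le_mul_of_nonneg_left ?_ hθ0.le
    rw [one_div] at hwlaP
    have := (mul_le_mul_iff_right₀ hcpos).2 hwlaP
    rw [← mul_assoc, mul_inv_cancel₀ hcpos.ne', one_mul] at this
    exact this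
  rw [hKLθ, hΓ]
  linarith
end

section
/- (KL drop, low boosting regime.) Let p and q be probability densities with respect to a σ-finite measure μ with q > 0 and KL(p,q) finite. Let c : X → ℝ be measurable with |c(x)| ≤ c* for all x (c* > 0 being the essential supremum of |c|), and suppose the weak learning guarantees (1/c*)·∫ c·p dμ ≥ γ_P and (1/c*)·∫ (-c)·q dμ ≥ γ_Q hold with γ_P ∈ (0,1] and γ_Q ∈ (0, 1/3). Let θ > 0, φ(θ) = log ∫ exp(θ·c)·q dμ, and q_θ = exp(θ·c - φ(θ))·q. Then KL(p, q_θ) ≤ KL(p,q) - c*·θ·(γ_P + γ_Q - c*·θ/2). -/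
open MeasureTheory

lemma sinh_nn {x : ℝ} (hx : 0 ≤ x) : 0 ≤ Real.sinh x := by
  rw [Real.sinh_eq]
  have := Real.exp_le_exp.2 (neg_le_self hx)
  linarith

/-- Monotonicity from a pointwise derivative that is nonnegative on `[a, b]`. -/
lemma le_of_deriv_aux (f f' : ℝ → ℝ) (hd : ∀ x, HasDerivAt f (f' x) x)
    (a b : ℝ) (hab : a ≤ b) (h' : ∀ x, a ≤ x → x ≤ b → 0 ≤ f' x) :
    f a ≤ f b := by
  have hmono : MonotoneOn f (Set.Icc a b) := by
    apply monotoneOn_of_deriv_nonneg (convex_Icc a b)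
    · exact (fun x _ => ((hd x).differentiableAt.continuousAt.continuousWithinAt))
    · exact fun x _ => (hd x).differentiableAt.differentiableWithinAt
    · intro x hx
      rw [interior_Icc] at hx
      rw [(hd x).deriv]
      exact h' x hx.1.le hx.2.le
  exact hmono ⟨le_refl a, hab⟩ ⟨hab, le_refl b⟩ hab

lemma sinh_le_mul_cosh {M : ℝ} (hM : 0 ≤ M) : Real.sinh M ≤ M * Real.cosh M := by
  have h := le_of_deriv_aux (fun x => x * Real.cosh x - Real.sinh x)
    (fun x => x * Real.sinh x)
    (fun x => by
      have h1 : HasDerivAt (fun x : ℝ => x * Real.cosh x)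
          (1 * Real.cosh x + x * Real.sinh x) x :=
        (hasDerivAt_id x).mul (Real.hasDerivAt_cosh x)
      have h2 := h1.sub (Real.hasDerivAt_sinh x)
      exact h2.congr_deriv (by ring))
    0 M hM
    (fun x hx _ => mul_nonneg hx (sinh_nn hx))
  simpa using h

lemma mul_cosh_le_two_sinh {M : ℝ} (hM : 0 ≤ M) (hM1 : M ≤ 1) :
    M * Real.cosh M ≤ 2 * Real.sinh M := by
  have h := le_of_deriv_aux (fun x => 2 * Real.sinh x - x * Real.cosh x)
    (fun x => Real.cosh x - x * Real.sinh x)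
    (fun x => by
      have h1 := (Real.hasDerivAt_sinh x).const_mul 2
      have h2 : HasDerivAt (fun x : ℝ => x * Real.cosh x)
          (1 * Real.cosh x + x * Real.sinh x) x :=
        (hasDerivAt_id x).mul (Real.hasDerivAt_cosh x)
      exact (h1.sub h2).congr_deriv (by ring))
    0 M hM
    (fun x hx hx1 => by
      have hs := sinh_le_mul_cosh hx
      have hc := (Real.cosh_pos x).le
      have hx1' : x ≤ 1 := le_trans hx1 hM1
      nlinarith [mul_le_mul_of_nonneg_left hs hx,
        mul_nonneg (mul_nonneg (by linarith : (0:ℝ) ≤ 1 - x) (by linarith : (0:ℝ) ≤ 1 + x)) hc])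
  simpa using h

lemma quarter_bound {M : ℝ} (hM : 0 ≤ M) (hM1 : M ≤ 1) :
    M ^ 2 / 4 * Real.sinh M ≤ M * Real.cosh M - Real.sinh M := by
  have h := le_of_deriv_aux
    (fun x => x * Real.cosh x - Real.sinh x - x ^ 2 / 4 * Real.sinh x)
    (fun x => x / 2 * Real.sinh x - x ^ 2 / 4 * Real.cosh x)
    (fun x => by
      have h1 : HasDerivAt (fun x : ℝ => x * Real.cosh x)
          (1 * Real.cosh x + x * Real.sinh x) x :=
        (hasDerivAt_id x).mul (Real.hasDerivAt_cosh x)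
      have h2 : HasDerivAt (fun x : ℝ => x ^ 2 / 4 * Real.sinh x)
          ((2 * x ^ 1 / 4) * Real.sinh x + x ^ 2 / 4 * Real.cosh x) x :=
        ((hasDerivAt_pow 2 x).div_const 4).mul (Real.hasDerivAt_sinh x)
      have h := (h1.sub (Real.hasDerivAt_sinh x)).sub h2
      exact h.congr_deriv (by ring))
    0 M hM
    (fun x hx hx1 => by
      have hb := mul_cosh_le_two_sinh hx (le_trans hx1 hM1)
      nlinarith [mul_le_mul_of_nonneg_left hb hx])
  simpa using h

lemma regime_b {M : ℝ} (hM : 1 ≤ M) :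
    (M / 3 - 1 / 9) * Real.sinh M ≤ M * Real.cosh M - Real.sinh M := by
  have key : ∀ x : ℝ, 1 ≤ x → Real.cosh x / 3 ≤ Real.sinh x := by
    intro x hx
    rw [Real.cosh_eq, Real.sinh_eq]
    have h2 : (2 : ℝ) ≤ Real.exp 1 * Real.exp 1 := by
      nlinarith [Real.add_one_le_exp (1 : ℝ)]
    have h3 : Real.exp 1 ≤ Real.exp x := Real.exp_le_exp.2 hx
    have h4 : Real.exp (-x) * Real.exp x = 1 := by
      rw [← Real.exp_add]; simp
    nlinarith [Real.exp_pos x, Real.exp_pos (-x), Real.exp_pos (1 : ℝ)]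
  have h1 : (0 : ℝ) ≤ 1 * Real.cosh 1 - (8 / 9 + 1 / 3) * Real.sinh 1 := by
    rw [Real.cosh_eq, Real.sinh_eq]
    have hsq : Real.exp 1 * Real.exp 1 ≤ 10 := by
      nlinarith [Real.exp_one_lt_d9, Real.exp_pos (1 : ℝ)]
    have h4 : Real.exp (-1 : ℝ) * Real.exp 1 = 1 := by
      rw [← Real.exp_add]; simp
    nlinarith [Real.exp_pos (1 : ℝ), Real.exp_pos (-1 : ℝ)]
  have h := le_of_deriv_aux
    (fun x => x * Real.cosh x - (8 / 9 + x / 3) * Real.sinh x)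
    (fun x => (x - 1 / 3) * (Real.sinh x - Real.cosh x / 3))
    (fun x => by
      have h1 : HasDerivAt (fun x : ℝ => x * Real.cosh x)
          (1 * Real.cosh x + x * Real.sinh x) x :=
        (hasDerivAt_id x).mul (Real.hasDerivAt_cosh x)
      have h2 : HasDerivAt (fun x : ℝ => (8 / 9 + x / 3) * Real.sinh x)
          ((0 + 1 / 3) * Real.sinh x + (8 / 9 + x / 3) * Real.cosh x) x := by
        exact ((hasDerivAt_const x (8 / 9 : ℝ)).add ((hasDerivAt_id x).div_const 3)).mul
          (Real.hasDerivAt_sinh x)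
      exact (h1.sub h2).congr_deriv (by ring))
    1 M hM
    (fun x hx _ => mul_nonneg (by linarith) (by linarith [key x hx]))
  nlinarith [h, h1]

/-- Key algebraic inequality behind Hoeffding's bound with `γ ≤ 1/3`. -/
lemma keyG {γ M : ℝ} (hγ0 : 0 ≤ γ) (hγ : γ ≤ 1 / 3) (hM : 0 ≤ M) :
    γ * (M - γ) * Real.sinh M ≤ M * Real.cosh M - Real.sinh M := by
  rcases le_or_gt M 1 with hM1 | hM1
  · have hq : γ * (M - γ) ≤ M ^ 2 / 4 := by nlinarith [sq_nonneg (M - 2 * γ)]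
    have := quarter_bound hM hM1
    have hs := sinh_nn hM
    nlinarith
  · have hq : γ * (M - γ) ≤ M / 3 - 1 / 9 := by
      nlinarith [mul_nonneg (by linarith : (0:ℝ) ≤ 1 / 3 - γ) (by linarith : (0:ℝ) ≤ M - γ - 1 / 3)]
    have := regime_b hM1.le
    have hs := sinh_nn hM
    nlinarith

lemma cosh_sub_sinh_pos {γ x : ℝ} (hγ0 : 0 ≤ γ) (hγ : γ ≤ 1) :
    0 < Real.cosh x - γ * Real.sinh x := by
  have h1 : Real.sinh x < Real.cosh x := Real.sinh_lt_cosh x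
  have h2 : -Real.cosh x < Real.sinh x := by
    have := Real.sinh_lt_cosh (-x)
    rw [Real.sinh_neg, Real.cosh_neg] at this
    linarith
  have hc := Real.cosh_pos x
  rcases le_or_gt 0 (Real.sinh x) with hs | hs
  · nlinarith
  · nlinarith

/-- Hoeffding-type bound: `log (cosh M - γ sinh M) ≤ M²/2 - γ M` for `γ ∈ [0, 1/3]`. -/
lemma hoeff {γ M : ℝ} (hγ0 : 0 ≤ γ) (hγ : γ ≤ 1 / 3) (hM : 0 ≤ M) :
    Real.log (Real.cosh M - γ * Real.sinh M) ≤ M ^ 2 / 2 - γ * M := by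
  have hγ1 : γ ≤ 1 := by linarith
  have h := le_of_deriv_aux
    (fun x => x ^ 2 / 2 - γ * x - Real.log (Real.cosh x - γ * Real.sinh x))
    (fun x => x - γ - (Real.sinh x - γ * Real.cosh x) / (Real.cosh x - γ * Real.sinh x))
    (fun x => by
      have hD := cosh_sub_sinh_pos hγ0 hγ1 (x := x)
      have h1 : HasDerivAt (fun x : ℝ => Real.cosh x - γ * Real.sinh x)
          (Real.sinh x - γ * Real.cosh x) x :=
        (Real.hasDerivAt_cosh x).sub ((Real.hasDerivAt_sinh x).const_mul γ)
      have h2 : HasDerivAt (fun x : ℝ => Real.log (Real.cosh x - γ * Real.sinh x))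
          ((Real.sinh x - γ * Real.cosh x) / (Real.cosh x - γ * Real.sinh x)) x := by
        have := h1.log hD.ne'
        simpa [div_eq_mul_inv] using this
      have h3 : HasDerivAt (fun x : ℝ => x ^ 2 / 2 - γ * x)
          (2 * x ^ 1 / 2 - γ * 1) x :=
        ((hasDerivAt_pow 2 x).div_const 2).sub ((hasDerivAt_id x).const_mul γ)
      exact (h3.sub h2).congr_deriv (by ring))
    0 M hM
    (fun x hx _ => by
      have hD := cosh_sub_sinh_pos hγ0 hγ1 (x := x)
      have hG := keyG hγ0 hγ hx
      rw [sub_nonneg, div_le_iff₀ hD]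
      nlinarith)
  simp only [Real.sinh_zero, Real.cosh_zero, mul_zero, sub_zero, Real.log_one] at h
  linarith

/-- Chord bound for the exponential. -/
lemma exp_chord {u M : ℝ} (hM : 0 < M) (h1 : -M ≤ u) (h2 : u ≤ M) :
    Real.exp u ≤ Real.cosh M + u / M * Real.sinh M := by
  have ha : (0 : ℝ) ≤ (M - u) / (2 * M) := div_nonneg (by linarith) (by linarith)
  have hb : (0 : ℝ) ≤ (M + u) / (2 * M) := div_nonneg (by linarith) (by linarith)
  have hab : (M - u) / (2 * M) + (M + u) / (2 * M) = 1 := by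
    field_simp
    ring
  have h := convexOn_exp.2 (Set.mem_univ (-M)) (Set.mem_univ M) ha hb hab
  have hM0 : M ≠ 0 := hM.ne'
  have hcomb : (M - u) / (2 * M) * (-M) + (M + u) / (2 * M) * M = u := by
    field_simp
    ring
  simp only [smul_eq_mul] at h
  rw [hcomb] at h
  have heq : (M - u) / (2 * M) * Real.exp (-M) + (M + u) / (2 * M) * Real.exp M
      = Real.cosh M + u / M * Real.sinh M := by
    rw [Real.cosh_eq, Real.sinh_eq]
    field_simp
    ring
  linarith [heq ▸ h]

/-- KL drop in the low boosting regime: under the weak learning guarantees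
with `γ_Q ∈ (0, 1/3)`, one boosting step with step size `θ > 0` decreases the
KL divergence by at least `c* θ (γ_P + γ_Q - c* θ / 2)`. -/
theorem kl_drop_low_boosting
    {X : Type*} [MeasurableSpace X] (μ : Measure X) [SigmaFinite μ]
    (p q : X → ℝ) (hpm : Measurable p) (hqm : Measurable q)
    (hp0 : ∀ x, 0 ≤ p x) (hq0 : ∀ x, 0 < q x)
    (hpint : Integrable p μ) (hqint : Integrable q μ)
    (hp1 : ∫ x, p x ∂μ = 1) (hq1 : ∫ x, q x ∂μ = 1)
    (hKLfin : Integrable (fun x => p x * Real.log (p x / q x)) μ)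
    (c : X → ℝ) (hcm : Measurable c)
    (cstar : ℝ) (hcstar : cstar = essSup (fun x => |c x|) μ) (hcpos : 0 < cstar)
    (hcb : ∀ x, |c x| ≤ cstar)
    (γP γQ : ℝ) (hγP : γP ∈ Set.Ioc (0 : ℝ) 1) (hγQ : γQ ∈ Set.Ioo (0 : ℝ) (1/3))
    (hwlaP : γP ≤ (1 / cstar) * ∫ x, c x * p x ∂μ)
    (hwlaQ : γQ ≤ (1 / cstar) * ∫ x, (-c x) * q x ∂μ)
    (θ : ℝ) (hθ : 0 < θ)
    (φ : ℝ) (hφ : φ = Real.log (∫ x, Real.exp (θ * c x) * q x ∂μ))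
    (qθ : X → ℝ) (hqθ : ∀ x, qθ x = Real.exp (θ * c x - φ) * q x) :
    KLd μ p qθ ≤ KLd μ p q - cstar * θ * (γP + γQ - cstar * θ / 2) := by
  set M : ℝ := θ * cstar with hM
  have hMpos : 0 < M := mul_pos hθ hcpos
  -- integrability facts
  have hcq_int : Integrable (fun x => c x * q x) μ := by
    refine (hqint.const_mul cstar).mono ((hcm.mul hqm).aestronglyMeasurable) ?_
    filter_upwards with x
    rw [norm_mul, norm_mul]
    simp only [Real.norm_eq_abs]
    have := (hq0 x).le
    have := hcb x
    have := (abs_nonneg (c x))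
    rw [abs_of_nonneg (hq0 x).le, abs_of_pos hcpos]
    exact mul_le_mul_of_nonneg_right (hcb x) (hq0 x).le
  have hcp_int : Integrable (fun x => c x * p x) μ := by
    refine (hpint.const_mul cstar).mono ((hcm.mul hpm).aestronglyMeasurable) ?_
    filter_upwards with x
    rw [norm_mul, norm_mul]
    simp only [Real.norm_eq_abs]
    rw [abs_of_nonneg (hp0 x), abs_of_pos hcpos]
    exact mul_le_mul_of_nonneg_right (hcb x) (hp0 x)
  have hexpq_int : Integrable (fun x => Real.exp (θ * c x) * q x) μ := by
    refine (hqint.const_mul (Real.exp M)).mono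
      (((Real.measurable_exp.comp (hcm.const_mul θ)).mul hqm).aestronglyMeasurable) ?_
    filter_upwards with x
    rw [norm_mul, norm_mul]
    simp only [Real.norm_eq_abs]
    rw [abs_of_nonneg (hq0 x).le, abs_of_pos (Real.exp_pos _), abs_of_pos (Real.exp_pos _)]
    refine mul_le_mul_of_nonneg_right ?_ (hq0 x).le
    apply Real.exp_le_exp.2
    calc θ * c x ≤ θ * |c x| := by
          exact mul_le_mul_of_nonneg_left (le_abs_self _) hθ.le
      _ ≤ θ * cstar := mul_le_mul_of_nonneg_left (hcb x) hθ.le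
  -- positivity of the partition function
  set Z : ℝ := ∫ x, Real.exp (θ * c x) * q x ∂μ with hZ
  have hZlb : Real.exp (-M) ≤ Z := by
    have hmono : ∀ x, Real.exp (-M) * q x ≤ Real.exp (θ * c x) * q x := by
      intro x
      refine mul_le_mul_of_nonneg_right (Real.exp_le_exp.2 ?_) (hq0 x).le
      have h1 : -(θ * |c x|) ≤ θ * c x := by
        have := neg_abs_le (c x)
        nlinarith [abs_nonneg (c x)]
      have h2 : θ * |c x| ≤ M := mul_le_mul_of_nonneg_left (hcb x) hθ.le
      linarith
    calc Real.exp (-M) = Real.exp (-M) * ∫ x, q x ∂μ := by rw [hq1]; ring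
      _ = ∫ x, Real.exp (-M) * q x ∂μ := (integral_const_mul _ _).symm
      _ ≤ Z := integral_mono (hqint.const_mul _) hexpq_int hmono
  have hZpos : 0 < Z := lt_of_lt_of_le (Real.exp_pos _) hZlb
  -- weak learning bounds
  have hcq_bound : ∫ x, c x * q x ∂μ ≤ -(cstar * γQ) := by
    have hneg : ∫ x, (-c x) * q x ∂μ = -∫ x, c x * q x ∂μ := by
      rw [← integral_neg]
      congr 1; funext x; ring
    rw [hneg] at hwlaQ
    have h := mul_le_mul_of_nonneg_left hwlaQ hcpos.le
    rw [one_div, ← mul_assoc, mul_inv_cancel₀ hcpos.ne', one_mul] at h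
    linarith
  have hcp_bound : cstar * γP ≤ ∫ x, c x * p x ∂μ := by
    have h := mul_le_mul_of_nonneg_left hwlaP hcpos.le
    rw [one_div, ← mul_assoc, mul_inv_cancel₀ hcpos.ne', one_mul] at h
    exact h
  -- bound Z by the chord
  have hZub : Z ≤ Real.cosh M - γQ * Real.sinh M := by
    have hchord_int : Integrable (fun x => (Real.cosh M + c x / cstar * Real.sinh M) * q x) μ := by
      have : (fun x => (Real.cosh M + c x / cstar * Real.sinh M) * q x)
          = fun x => Real.cosh M * q x + Real.sinh M / cstar * (c x * q x) := by
        funext x; field_simp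
      rw [this]
      exact (hqint.const_mul _).add (hcq_int.const_mul _)
    have hZle : Z ≤ ∫ x, (Real.cosh M + c x / cstar * Real.sinh M) * q x ∂μ := by
      refine integral_mono hexpq_int hchord_int (fun x => ?_)
      refine mul_le_mul_of_nonneg_right ?_ (hq0 x).le
      have h1 : -M ≤ θ * c x := by
        have := neg_abs_le (c x)
        have h2 : θ * |c x| ≤ M := mul_le_mul_of_nonneg_left (hcb x) hθ.le
        nlinarith [abs_nonneg (c x)]
      have h2 : θ * c x ≤ M := by
        have := le_abs_self (c x)
        have h2 : θ * |c x| ≤ M := mul_le_mul_of_nonneg_left (hcb x) hθ.le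
        nlinarith
      have := exp_chord hMpos h1 h2
      have heq : θ * c x / M = c x / cstar := by
        rw [hM]; field_simp
      rw [heq] at this
      exact this
    have hint_eq : ∫ x, (Real.cosh M + c x / cstar * Real.sinh M) * q x ∂μ
        = Real.cosh M + Real.sinh M / cstar * ∫ x, c x * q x ∂μ := by
      have : (fun x => (Real.cosh M + c x / cstar * Real.sinh M) * q x)
          = fun x => Real.cosh M * q x + Real.sinh M / cstar * (c x * q x) := by
        funext x; field_simp
      rw [this, integral_add (hqint.const_mul _) (hcq_int.const_mul _),
        integral_const_mul, integral_const_mul, hq1, mul_one]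
    have hsinh : 0 ≤ Real.sinh M := sinh_nn hMpos.le
    have : Real.sinh M / cstar * ∫ x, c x * q x ∂μ ≤ -(γQ * Real.sinh M) := by
      have h := mul_le_mul_of_nonneg_left hcq_bound (div_nonneg hsinh hcpos.le)
      calc Real.sinh M / cstar * ∫ x, c x * q x ∂μ
          ≤ Real.sinh M / cstar * (-(cstar * γQ)) := h
        _ = -(γQ * Real.sinh M) := by field_simp
    linarith [hZle, hint_eq ▸ hZle, hint_eq.symm ▸ hZle, this, hint_eq]
  -- bound on φ
  have hφ_bound : φ ≤ M ^ 2 / 2 - γQ * M := by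
    rw [hφ]
    calc Real.log Z ≤ Real.log (Real.cosh M - γQ * Real.sinh M) :=
        Real.log_le_log hZpos hZub
      _ ≤ M ^ 2 / 2 - γQ * M := hoeff hγQ.1.le hγQ.2.le hMpos.le
  -- pointwise decomposition of the KL integrand
  have hpt : ∀ x, p x * Real.log (p x / qθ x)
      = p x * Real.log (p x / q x) + p x * (φ - θ * c x) := by
    intro x
    rcases eq_or_lt_of_le (hp0 x) with hpx | hpx
    · rw [← hpx]; ring
    · have hqx := hq0 x
      have hqθx : 0 < qθ x := by
        rw [hqθ x]; positivity
      rw [hqθ x, Real.log_div hpx.ne' (by positivity), Real.log_div hpx.ne' hqx.ne',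
        Real.log_mul (Real.exp_pos _).ne' hqx.ne', Real.log_exp]
      ring
  -- KL identity
  have hint2 : Integrable (fun x => p x * (φ - θ * c x)) μ := by
    have : (fun x => p x * (φ - θ * c x)) = fun x => φ * p x - θ * (c x * p x) := by
      funext x; ring
    rw [this]
    exact (hpint.const_mul φ).sub (hcp_int.const_mul θ)
  have hKL : KLd μ p qθ = KLd μ p q + φ - θ * ∫ x, c x * p x ∂μ := by
    unfold KLd
    have : (fun x => p x * Real.log (p x / qθ x))
        = fun x => p x * Real.log (p x / q x) + p x * (φ - θ * c x) := funext hpt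
    rw [this, integral_add hKLfin hint2]
    have h2 : ∫ x, p x * (φ - θ * c x) ∂μ = φ - θ * ∫ x, c x * p x ∂μ := by
      have : (fun x => p x * (φ - θ * c x)) = fun x => φ * p x - θ * (c x * p x) := by
        funext x; ring
      rw [this, integral_sub (hpint.const_mul φ) (hcp_int.const_mul θ),
        integral_const_mul, integral_const_mul, hp1, mul_one]
    rw [h2]; ring
  rw [hKL]
  have hP : θ * (cstar * γP) ≤ θ * ∫ x, c x * p x ∂μ :=
    mul_le_mul_of_nonneg_left hcp_bound hθ.le
  rw [hM] at hφ_bound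
  nlinarith [hφ_bound, hP]
end

section
/- Let ε > 0, let p and q_0 be probability densities with respect to a σ-finite measure μ with p, q_0 > 0, and let q(x) = exp(g(x))·q_0(x) be a probability density with g(x) ∈ [-ε/2, ε/2] for all x. Assume KL(p,q_0) and KL(p,q) are finite and set Δ = KL(p,q_0) - KL(p,q). Then for any measurable B ⊆ X, m(B,q) ≥ m(B,p) - KL(p,q_0;B) + (ε/2)·(m(B,p) + 2Δ/ε - 1), where m(B,r) = ∫_B r dμ and KL(p,q_0;B) = ∫_B p·log(p/q_0) dμ. -/
open MeasureTheory

/-- Mass-capture bound for a mollified exponential-family member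
`q = exp(g) q₀` with `|g| ≤ ε/2`: for any measurable `B`,
`m(B,q) ≥ m(B,p) - KL(p,q₀;B) + (ε/2)(m(B,p) + 2Δ/ε - 1)` where
`Δ = KL(p,q₀) - KL(p,q)`. -/
theorem mass_capture_bound_mollified
    {X : Type*} [MeasurableSpace X] (μ : Measure X) [SigmaFinite μ]
    (ε : ℝ) (hε : 0 < ε)
    (p q0 q : X → ℝ) (hpm : Measurable p) (hq0m : Measurable q0)
    (hp0 : ∀ x, 0 < p x) (hq00 : ∀ x, 0 < q0 x)
    (hpint : Integrable p μ) (hq0int : Integrable q0 μ)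
    (hqint : Integrable q μ)
    (hp1 : ∫ x, p x ∂μ = 1) (hq01 : ∫ x, q0 x ∂μ = 1)
    (g : X → ℝ) (hgm : Measurable g)
    (hgb : ∀ x, g x ∈ Set.Icc (-(ε / 2)) (ε / 2))
    (hq : ∀ x, q x = Real.exp (g x) * q0 x)
    (hq1 : ∫ x, q x ∂μ = 1)
    (hKL0fin : Integrable (fun x => p x * Real.log (p x / q0 x)) μ)
    (hKLfin : Integrable (fun x => p x * Real.log (p x / q x)) μ)
    (Δ : ℝ) (hΔ : Δ = KLd μ p q0 - KLd μ p q) :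
    ∀ B : Set X, MeasurableSet B →
      ∫ x in B, q x ∂μ ≥
        (∫ x in B, p x ∂μ) - (∫ x in B, p x * Real.log (p x / q0 x) ∂μ) +
          ε / 2 * ((∫ x in B, p x ∂μ) + 2 * Δ / ε - 1) := by
  intro B hB
  have hεne : ε ≠ 0 := ne_of_gt hε
  have hqpos : ∀ x, 0 < q x := fun x => by rw [hq x]; exact mul_pos (Real.exp_pos _) (hq00 x)
  have hlq : ∀ x, Real.log (q x) = g x + Real.log (q0 x) := by
    intro x
    rw [hq x, Real.log_mul (Real.exp_ne_zero _) (hq00 x).ne', Real.log_exp]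
  -- p·g = K0 - K pointwise
  have hpg : ∀ x, p x * g x
      = p x * Real.log (p x / q0 x) - p x * Real.log (p x / q x) := by
    intro x
    rw [Real.log_div (hp0 x).ne' (hq00 x).ne',
      Real.log_div (hp0 x).ne' (hqpos x).ne', hlq x]
    ring
  have hpgint : Integrable (fun x => p x * g x) μ := by
    exact (hKL0fin.sub hKLfin).congr
      (by filter_upwards with x using (hpg x).symm)
  have hΔeq : Δ = ∫ x, p x * g x ∂μ := by
    rw [hΔ, KLd, KLd, ← integral_sub hKL0fin hKLfin]
    exact (integral_congr_ae (by filter_upwards with x using hpg x)).symm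
  -- pointwise lower bound on q
  have hpt : ∀ x, p x - p x * Real.log (p x / q0 x) + p x * g x ≤ q x := by
    intro x
    have h1 : Real.log (q x / p x) + 1 ≤ q x / p x := by
      have h := Real.add_one_le_exp (Real.log (q x / p x))
      rwa [Real.exp_log (div_pos (hqpos x) (hp0 x))] at h
    have h2 : p x * (Real.log (q x / p x) + 1) ≤ q x := by
      have h := mul_le_mul_of_nonneg_left h1 (hp0 x).le
      rwa [mul_div_cancel₀ _ (hp0 x).ne'] at h
    have hlog : Real.log (q x / p x) = g x - Real.log (p x / q0 x) := by
      rw [Real.log_div (hqpos x).ne' (hp0 x).ne',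
        Real.log_div (hp0 x).ne' (hq00 x).ne', hlq x]
      ring
    rw [hlog] at h2
    nlinarith [h2]
  -- integrate over B
  have hint1 : IntegrableOn
      (fun x => p x - p x * Real.log (p x / q0 x) + p x * g x) B μ :=
    ((hpint.sub hKL0fin).add hpgint).integrableOn
  have h4 : ∫ x in B, (p x - p x * Real.log (p x / q0 x) + p x * g x) ∂μ
      ≤ ∫ x in B, q x ∂μ :=
    setIntegral_mono_on hint1 hqint.integrableOn hB (fun x _ => hpt x)
  have h5 : ∫ x in B, (p x - p x * Real.log (p x / q0 x) + p x * g x) ∂μ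
      = (∫ x in B, p x ∂μ) - (∫ x in B, p x * Real.log (p x / q0 x) ∂μ)
        + ∫ x in B, p x * g x ∂μ := by
    have h6 := integral_add (μ := μ.restrict B)
      (hpint.integrableOn.sub hKL0fin.integrableOn) hpgint.integrableOn
    have h7 := integral_sub (μ := μ.restrict B) hpint.integrableOn
      hKL0fin.integrableOn
    simp only [Pi.add_apply, Pi.sub_apply] at h6 h7
    rw [h6, h7]
  -- lower bound on ∫_B p g
  have hsplit : (∫ x in B, p x * g x ∂μ) + (∫ x in Bᶜ, p x * g x ∂μ)
      = ∫ x, p x * g x ∂μ := integral_add_compl hB hpgint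
  have hsplitp : (∫ x in B, p x ∂μ) + (∫ x in Bᶜ, p x ∂μ) = 1 := by
    rw [integral_add_compl hB hpint, hp1]
  have hcomp : ∫ x in Bᶜ, p x * g x ∂μ ≤ ∫ x in Bᶜ, ε / 2 * p x ∂μ := by
    apply setIntegral_mono_on hpgint.integrableOn
      (hpint.const_mul _).integrableOn hB.compl
    intro x _
    have := mul_le_mul_of_nonneg_left (hgb x).2 (hp0 x).le
    linarith
  have hconst : ∫ x in Bᶜ, ε / 2 * p x ∂μ = ε / 2 * ∫ x in Bᶜ, p x ∂μ :=
    integral_const_mul _ _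
  have hpgB : Δ - ε / 2 * (1 - ∫ x in B, p x ∂μ) ≤ ∫ x in B, p x * g x ∂μ := by
    have hBc : ∫ x in Bᶜ, p x ∂μ = 1 - ∫ x in B, p x ∂μ := by linarith
    rw [hΔeq, ← hsplit]
    rw [hconst, hBc] at hcomp
    linarith
  have hkey : ε / 2 * ((∫ x in B, p x ∂μ) + 2 * Δ / ε - 1)
      = ε / 2 * (∫ x in B, p x ∂μ) + Δ - ε / 2 := by
    field_simp
  rw [ge_iff_le, hkey]
  linarith [h4, h5.symm.le]
end

section
/- (Mode capture.) Let ε > 0, T ≥ 1, γ_P, γ_Q ∈ (0,1], and set θ_T(ε) = (ε/(ε + 4·log 2))^T and h(x) = ε + 2x. Let p and q_0 be probability densities with respect to a σ-finite measure μ with p, q_0 > 0, and let q_T(x) = exp(g(x))·q_0(x) be a probability density with g(x) ∈ [-ε/2, ε/2] for all x. Assume KL(p,q_0) and KL(p,q_T) are finite and that the high-boosting-regime guarantee KL(p,q_0) - KL(p,q_T) ≥ (ε/2)·((γ_P + γ_Q)/2)·(1 - θ_T(ε)) holds. Then for every α ∈ [0,1] and every measurable B ⊆ X with m(B,p) ≥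 ε·h((2 - γ_P - γ_Q)·T)/(h(α)·h(T)), one has m(B,q_T) ≥ (1 - α)·m(B,p) - KL(p,q_0;B). -/
open MeasureTheory

lemma aux_sub_le_mul_log {a b : ℝ} (ha : 0 < a) (hb : 0 < b) :
    a - b ≤ a * Real.log (a / b) := by
  have h1 : Real.log (b / a) ≤ b / a - 1 := Real.log_le_sub_one_of_pos (div_pos hb ha)
  have h2 : Real.log (a / b) = - Real.log (b / a) := by
    rw [← Real.log_inv, inv_div]
  have h3 : b / a * a = b := div_mul_cancel₀ b ha.ne'
  rw [h2]
  nlinarith [mul_le_mul_of_nonneg_right h1 ha.le]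

lemma aux_pow_div (ε : ℝ) (hε : 0 < ε) (T : ℕ) :
    (ε / (ε + 2)) ^ T ≤ ε / (ε + 2 * T) := by
  induction T with
  | zero => simp [div_self hε.ne']
  | succ n ih =>
    have hd1 : (0:ℝ) < ε + 2 := by linarith
    have hd2 : (0:ℝ) < ε + 2 * n := by positivity
    have hd3 : (0:ℝ) < ε + 2 * ((n:ℝ) + 1) := by positivity
    have hstep : ε / (ε + 2 * n) * (ε / (ε + 2)) ≤ ε / (ε + 2 * ((n:ℝ) + 1)) := by
      rw [div_mul_div_comm, div_le_div_iff₀ (by positivity) hd3]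
      nlinarith
    push_cast
    calc (ε / (ε + 2)) ^ (n + 1) = (ε / (ε + 2)) ^ n * (ε / (ε + 2)) := by ring
      _ ≤ ε / (ε + 2 * n) * (ε / (ε + 2)) :=
          mul_le_mul_of_nonneg_right ih (by positivity)
      _ ≤ ε / (ε + 2 * ((n:ℝ) + 1)) := hstep

lemma aux_key (ε : ℝ) (hε : 0 < ε) (T : ℕ) :
    (ε / (ε + 4 * Real.log 2)) ^ T * (ε + 2 * T) ≤ ε := by
  have hL : (2:ℝ) ≤ 4 * Real.log 2 := by nlinarith [Real.log_two_gt_d9]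
  have hd : (0:ℝ) < ε + 4 * Real.log 2 := by linarith
  have hD : (0:ℝ) < ε + 2 * T := by positivity
  have h1 : (ε / (ε + 4 * Real.log 2)) ^ T ≤ (ε / (ε + 2)) ^ T := by
    gcongr <;> linarith
  have h2 := aux_pow_div ε hε T
  calc (ε / (ε + 4 * Real.log 2)) ^ T * (ε + 2 * T)
      ≤ (ε / (ε + 2 * T)) * (ε + 2 * T) :=
        mul_le_mul_of_nonneg_right (h1.trans h2) hD.le
    _ = ε := div_mul_cancel₀ ε hD.ne'

lemma aux_final (ε α γP γQ θ Tr MB GB : ℝ)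
    (hε : 0 < ε) (hα : 0 ≤ α)
    (hγP : 0 < γP) (hγP1 : γP ≤ 1) (hγQ : 0 < γQ) (hγQ1 : γQ ≤ 1)
    (hTr : 1 ≤ Tr) (hθ : 0 ≤ θ)
    (hkey : θ * (ε + 2 * Tr) ≤ ε)
    (hMBnn : 0 ≤ MB)
    (hmass : ε * (ε + 2 * ((2 - γP - γQ) * Tr)) ≤ MB * ((ε + 2 * α) * (ε + 2 * Tr)))
    (hGlow : GB ≥ ε / 2 * ((γP + γQ) / 2 * (1 - θ)) - ε / 2 * (1 - MB)) :
    GB ≥ -α * MB := by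
  have hD : (0:ℝ) < ε + 2 * Tr := by linarith
  have hstep : ε * ((1 - (γP + γQ) / 2) + (γP + γQ) / 2 * θ) * (ε + 2 * Tr)
      ≤ ε * (ε + 2 * ((2 - γP - γQ) * Tr)) := by
    nlinarith [mul_le_mul_of_nonneg_left hkey
        (show (0:ℝ) ≤ ε * ((γP + γQ) / 2) by positivity),
      mul_nonneg (mul_nonneg hε.le (show (0:ℝ) ≤ 2 - γP - γQ by linarith))
        (show (0:ℝ) ≤ Tr by linarith)]
  have hAMB : ε * ((1 - (γP + γQ) / 2) + (γP + γQ) / 2 * θ)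
      ≤ (ε + 2 * α) * MB := by
    have h3 : ε * ((1 - (γP + γQ) / 2) + (γP + γQ) / 2 * θ) * (ε + 2 * Tr)
        ≤ ((ε + 2 * α) * MB) * (ε + 2 * Tr) := by
      calc ε * ((1 - (γP + γQ) / 2) + (γP + γQ) / 2 * θ) * (ε + 2 * Tr)
          ≤ ε * (ε + 2 * ((2 - γP - γQ) * Tr)) := hstep
        _ ≤ MB * ((ε + 2 * α) * (ε + 2 * Tr)) := hmass
        _ = ((ε + 2 * α) * MB) * (ε + 2 * Tr) := by ring
    exact le_of_mul_le_mul_right h3 hD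
  nlinarith [hAMB, hGlow]

/-- Mode capture: under the high-boosting-regime KL guarantee, for every
`α ∈ [0,1]` and every measurable region `B` of mass at least
`ε h((2 - γ_P - γ_Q) T) / (h(α) h(T))` under `p` (with `h(x) = ε + 2x`), the
MBDE output `q_T = exp(g) q₀` captures mass
`m(B,q_T) ≥ (1 - α) m(B,p) - KL(p,q₀;B)`. -/
theorem mode_capture
    {X : Type*} [MeasurableSpace X] (μ : Measure X) [SigmaFinite μ]
    (ε : ℝ) (hε : 0 < ε) (T : ℕ) (hT : 1 ≤ T)
    (γP γQ : ℝ) (hγP : γP ∈ Set.Ioc (0 : ℝ) 1) (hγQ : γQ ∈ Set.Ioc (0 : ℝ) 1)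
    (h : ℝ → ℝ) (hh : ∀ x, h x = ε + 2 * x)
    (p q0 qT : X → ℝ) (hpm : Measurable p) (hq0m : Measurable q0)
    (hp0 : ∀ x, 0 < p x) (hq00 : ∀ x, 0 < q0 x)
    (hpint : Integrable p μ) (hq0int : Integrable q0 μ)
    (hqTint : Integrable qT μ)
    (hp1 : ∫ x, p x ∂μ = 1) (hq01 : ∫ x, q0 x ∂μ = 1)
    (g : X → ℝ) (hgm : Measurable g)
    (hgb : ∀ x, g x ∈ Set.Icc (-(ε / 2)) (ε / 2))
    (hqT : ∀ x, qT x = Real.exp (g x) * q0 x)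
    (hqT1 : ∫ x, qT x ∂μ = 1)
    (hKL0fin : Integrable (fun x => p x * Real.log (p x / q0 x)) μ)
    (hKLTfin : Integrable (fun x => p x * Real.log (p x / qT x)) μ)
    (hhigh : KLd μ p q0 - KLd μ p qT ≥
      ε / 2 * ((γP + γQ) / 2 * (1 - (ε / (ε + 4 * Real.log 2)) ^ T))) :
    ∀ α ∈ Set.Icc (0 : ℝ) 1, ∀ B : Set X, MeasurableSet B →
      (∫ x in B, p x ∂μ) ≥
        ε * h ((2 - γP - γQ) * (T : ℝ)) / (h α * h (T : ℝ)) →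
      ∫ x in B, qT x ∂μ ≥
        (1 - α) * (∫ x in B, p x ∂μ) -
          ∫ x in B, p x * Real.log (p x / q0 x) ∂μ := by
  intro α hα B hB hmass
  have hqT0 : ∀ x, 0 < qT x := fun x => by
    rw [hqT x]; exact mul_pos (Real.exp_pos _) (hq00 x)
  -- pointwise identity: p log(p/qT) = p log(p/q0) - p g
  have hlogT : ∀ x, p x * Real.log (p x / qT x)
      = p x * Real.log (p x / q0 x) - p x * g x := by
    intro x
    rw [hqT x, Real.log_div (hp0 x).ne' (mul_pos (Real.exp_pos _) (hq00 x)).ne',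
      Real.log_mul (Real.exp_ne_zero _) (hq00 x).ne', Real.log_exp,
      Real.log_div (hp0 x).ne' (hq00 x).ne']
    ring
  have hpg_int : Integrable (fun x => p x * g x) μ := by
    refine (hKL0fin.sub hKLTfin).congr (Filter.Eventually.of_forall fun x => ?_)
    simp only [Pi.sub_apply, hlogT x]; ring
  have hG : ∫ x, p x * g x ∂μ = KLd μ p q0 - KLd μ p qT := by
    unfold KLd
    rw [← integral_sub hKL0fin hKLTfin]
    exact integral_congr_ae (Filter.Eventually.of_forall fun x => by
      simp only [hlogT x]; ring)
  set MB := ∫ x in B, p x ∂μ with hMB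
  set QB := ∫ x in B, qT x ∂μ with hQB
  set K0B := ∫ x in B, p x * Real.log (p x / q0 x) ∂μ with hK0B
  set GB := ∫ x in B, p x * g x ∂μ with hGB
  -- QB ≥ MB - K0B + GB
  have h2' : MB - QB ≤ K0B - GB := by
    have hmono : ∫ x in B, (p x - qT x) ∂μ
        ≤ ∫ x in B, p x * Real.log (p x / qT x) ∂μ :=
      setIntegral_mono_on (hpint.integrableOn.sub hqTint.integrableOn)
        hKLTfin.integrableOn hB
        (fun x _ => aux_sub_le_mul_log (hp0 x) (hqT0 x))
    have hsub : ∫ x in B, (p x - qT x) ∂μ = MB - QB :=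
      integral_sub hpint.integrableOn hqTint.integrableOn
    have hKTB : ∫ x in B, p x * Real.log (p x / qT x) ∂μ = K0B - GB := by
      rw [← integral_sub hKL0fin.integrableOn hpg_int.integrableOn]
      exact integral_congr_ae (Filter.Eventually.of_forall fun x => hlogT x)
    rw [hsub, hKTB] at hmono
    exact hmono
  -- splits over B and Bᶜ
  have hGsplit : GB + ∫ x in Bᶜ, p x * g x ∂μ = ∫ x, p x * g x ∂μ :=
    integral_add_compl hB hpg_int
  have hPsplit : MB + ∫ x in Bᶜ, p x ∂μ = 1 := by
    rw [hMB, integral_add_compl hB hpint, hp1]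
  have hMB_nonneg : 0 ≤ MB := setIntegral_nonneg hB fun x _ => (hp0 x).le
  have hPc : ∫ x in Bᶜ, p x ∂μ = 1 - MB := by linarith
  have hGc : ∫ x in Bᶜ, p x * g x ∂μ ≤ ε / 2 * (1 - MB) := by
    have h4 : ∫ x in Bᶜ, p x * g x ∂μ ≤ ∫ x in Bᶜ, ε / 2 * p x ∂μ :=
      setIntegral_mono_on hpg_int.integrableOn
        (hpint.integrableOn.const_mul _) hB.compl
        (fun x _ => by nlinarith [(hgb x).2, (hp0 x).le])
    rwa [integral_const_mul, hPc] at h4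
  -- lower bound on GB
  set θ := (ε / (ε + 4 * Real.log 2)) ^ T with hθ
  have hGlow : GB ≥ ε / 2 * ((γP + γQ) / 2 * (1 - θ)) - ε / 2 * (1 - MB) := by
    have hGfull : ∫ x, p x * g x ∂μ ≥ ε / 2 * ((γP + γQ) / 2 * (1 - θ)) := by
      rw [hG]; exact hhigh
    linarith
  -- the mass bound
  simp only [hh] at hmass
  have hD : (0:ℝ) < ε + 2 * (T : ℝ) := by positivity
  have hA : (0:ℝ) < ε + 2 * α := by
    have := hα.1; linarith
  have hmass' : ε * (ε + 2 * ((2 - γP - γQ) * (T : ℝ)))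
      ≤ MB * ((ε + 2 * α) * (ε + 2 * (T : ℝ))) := by
    rw [ge_iff_le, div_le_iff₀ (by positivity)] at hmass
    exact hmass
  have hkey : θ * (ε + 2 * (T : ℝ)) ≤ ε := aux_key ε hε T
  have hθnn : 0 ≤ θ := by positivity
  have hTnn : (1:ℝ) ≤ (T:ℝ) := by exact_mod_cast hT
  have hfinal : GB ≥ -α * MB :=
    aux_final ε α γP γQ θ (T : ℝ) MB GB hε hα.1 hγP.1 hγP.2 hγQ.1 hγQ.2
      hTnn hθnn hkey hMB_nonneg hmass' hGlow
  nlinarith [h2', hfinal]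
end
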